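/- Let A be a J_p-set in (ℕ,+) and let B be a finite subset of ℕ. Then A ∖ B is a J_p-set in (ℕ,+). -/

import Mathlib

/- Here the positive integers are encoded inside Lean's `ℕ` via positivity conditions.
`ℙ_ℕ` is encoded as the set of `p : Polynomial ℕ` with `p ≠ 0` and `p.coeff 0 = 0`
(nonzero polynomials with coefficients in `ℕ ∪ {0}` and zero constant term). -/

/-- `A ⊆ ℕ⁺` is a `J_p`-set in `(ℕ,+)` (`ℕ` the positive integers): for every nonempty
finite `R ⊆ ℙ_ℕ` and every nonempty finite set `L` of functions `g : ℕ → ℕ⁺` there are a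
positive `a` and a nonempty finite `H ⊆ ℕ` with `a + f(∑_{t ∈ H} g(t)) ∈ A` for every
`f ∈ R` and `g ∈ L`. -/
def JpSetN (A : Set ℕ) : Prop :=
  ∀ R : Finset (Polynomial ℕ), R.Nonempty → (∀ f ∈ R, f ≠ 0 ∧ f.coeff 0 = 0) →
    ∀ L : Finset (ℕ → ℕ), L.Nonempty → (∀ g ∈ L, ∀ n, 0 < g n) →
      ∃ a : ℕ, 0 < a ∧ ∃ H : Finset ℕ, H.Nonempty ∧
        ∀ f ∈ R, ∀ g ∈ L, a + Polynomial.eval (∑ t ∈ H, g t) f ∈ A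

/-- A nonzero polynomial over `ℕ` with zero constant term satisfies `s ≤ p.eval s`
for `s ≥ 1`. -/
lemma eval_ge_self (p : Polynomial ℕ) (hp : p ≠ 0) (h0 : p.coeff 0 = 0)
    (s : ℕ) (hs : 1 ≤ s) : s ≤ p.eval s := by
  have hd : p.natDegree ≠ 0 := by
    intro h
    apply hp
    have := Polynomial.eq_C_of_natDegree_eq_zero h
    rw [this, h0, map_zero]
  have hlc : 1 ≤ p.coeff p.natDegree := by
    have : p.coeff p.natDegree ≠ 0 := Polynomial.coeff_ne_zero_of_eq_degree
      (Polynomial.degree_eq_natDegree hp)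
    omega
  have h1 : s ≤ p.coeff p.natDegree * s ^ p.natDegree := by
    calc s = 1 * s ^ 1 := by ring
    _ ≤ p.coeff p.natDegree * s ^ p.natDegree :=
      Nat.mul_le_mul hlc (Nat.pow_le_pow_right hs (by omega))
  refine h1.trans ?_
  rw [Polynomial.eval_eq_sum_range]
  exact Finset.single_le_sum (f := fun i => p.coeff i * s ^ i)
    (fun i _ => Nat.zero_le _) (Finset.mem_range.mpr (Nat.lt_succ_self _))

/-- If `A` is a `J_p`-set in `(ℕ,+)` (`ℕ` the positive integers) and `B`
is a finite subset of `ℕ`, then `A \ B` is a `J_p`-set. -/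
theorem stmt16 (A : Set ℕ) (hA : ∀ n ∈ A, 0 < n) (hJp : JpSetN A)
    (B : Set ℕ) (hBpos : ∀ n ∈ B, 0 < n) (hB : B.Finite) :
    JpSetN (A \ B) := by
  classical
  intro R hR hRcond L hL hLpos
  obtain ⟨M, hM⟩ := hB.bddAbove
  set N := M + 1 with hN
  have hNpos : 0 < N := by omega
  set T : (ℕ → ℕ) → (ℕ → ℕ) := fun g t => ∑ i ∈ Finset.range N, g (N * t + i) with hT
  have hTge : ∀ g ∈ L, ∀ t, N ≤ T g t := by
    intro g hg t
    calc N = ∑ _i ∈ Finset.range N, 1 := by simp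
    _ ≤ T g t := Finset.sum_le_sum fun i _ => hLpos g hg _
  have hL'pos : ∀ g' ∈ L.image T, ∀ n, 0 < g' n := by
    intro g' hg' n
    obtain ⟨g, hg, rfl⟩ := Finset.mem_image.mp hg'
    exact lt_of_lt_of_le hNpos (hTge g hg n)
  obtain ⟨a, ha, H, hHne, hH⟩ := hJp R hR hRcond (L.image T) (hL.image T) hL'pos
  refine ⟨a, ha, H.biUnion (fun t => (Finset.range N).image (fun i => N * t + i)), ?_, ?_⟩
  · obtain ⟨t, ht⟩ := hHne
    exact ⟨N * t, Finset.mem_biUnion.mpr ⟨t, ht,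
      Finset.mem_image.mpr ⟨0, Finset.mem_range.mpr hNpos, by ring⟩⟩⟩
  · intro f hf g hg
    have hsum : ∑ s ∈ H.biUnion (fun t => (Finset.range N).image (fun i => N * t + i)), g s
        = ∑ t ∈ H, T g t := by
      rw [Finset.sum_biUnion]
      · refine Finset.sum_congr rfl fun t _ => ?_
        rw [Finset.sum_image]
        intro i _ j _ hij
        simp only at hij
        omega
      · intro t1 _ t2 _ hne
        simp only [Function.onFun, Finset.disjoint_left, Finset.mem_image, Finset.mem_range]
        rintro x ⟨i, hi, rfl⟩ ⟨j, hj, he⟩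
        have e1 : (N * t1 + i) / N = t1 := by
          rw [Nat.mul_add_div hNpos, Nat.div_eq_of_lt hi, Nat.add_zero]
        have e2 : (N * t2 + j) / N = t2 := by
          rw [Nat.mul_add_div hNpos, Nat.div_eq_of_lt hj, Nat.add_zero]
        exact hne (by rw [← e1, ← e2, he])
    rw [hsum]
    set S := ∑ t ∈ H, T g t with hS
    have hSge : N ≤ S := by
      obtain ⟨t, ht⟩ := hHne
      exact (hTge g hg t).trans (Finset.single_le_sum (fun _ _ => Nat.zero_le _) ht)
    have hmemA : a + Polynomial.eval S f ∈ A :=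
      hH f hf (T g) (Finset.mem_image_of_mem T hg)
    refine ⟨hmemA, fun hbB => ?_⟩
    obtain ⟨hf0, hfc⟩ := hRcond f hf
    have hle : S ≤ Polynomial.eval S f := eval_ge_self f hf0 hfc S (by omega)
    have := hM hbB
    omega
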